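/- For every continuous pair-coloring c on the Cantor space 2^ℕ, there exist a compact set A ⊆ ℕ^ℕ and an almost node-coloring d on A such that hm(c) ≤ hm(d). -/

import Mathlib

open Cardinal Topology

/-- The least index where two sequences differ. -/
noncomputable def Delta {α : Type*} (x y : ℕ → α) : ℕ := sInf {n | x n ≠ y n}

/-- A set is homogeneous for a pair-coloring `c` if `c` is constant on pairs of
distinct elements of the set. -/
def IsHomog {X : Type*} (c : X → X → Fin 2) (H : Set X) : Prop :=
  ∃ i : Fin 2, ∀ x ∈ H, ∀ y ∈ H, x ≠ y → c x y = i

/-- The homogeneity number of a pair-coloring: the least cardinality of a family of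
homogeneous sets covering the space. -/
noncomputable def hm {X : Type*} (c : X → X → Fin 2) : Cardinal :=
  sInf { κ | ∃ F : Set (Set X), #F = κ ∧ (∀ H ∈ F, IsHomog c H) ∧ ⋃₀ F = Set.univ }

/-- The homogeneity number of the restriction of a coloring to a subset. -/
noncomputable def hmOn {X : Type*} (c : X → X → Fin 2) (Y : Set X) : Cardinal :=
  sInf { κ | ∃ F : Set (Set X), #F = κ ∧ (∀ H ∈ F, H ⊆ Y ∧ IsHomog c H) ∧ ⋃₀ F = Y }

/-- A pair-coloring is continuous if it is continuous on `X × X` minus the diagonal. -/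
def ContColoring {X : Type*} [TopologicalSpace X] (c : X → X → Fin 2) : Prop :=
  Continuous fun p : {q : X × X // q.1 ≠ q.2} => c p.val.1 p.val.2

/-- Symmetry of a pair-coloring on distinct points. -/
def SymmColoring {X : Type*} (c : X → X → Fin 2) : Prop :=
  ∀ x y : X, x ≠ y → c x y = c y x

/-- A continuous pair-coloring is reduced if no nonempty open set is homogeneous. -/
def Reduced {X : Type*} [TopologicalSpace X] (c : X → X → Fin 2) : Prop :=
  ContColoring c ∧ ∀ U : Set X, IsOpen U → U.Nonempty → ¬ IsHomog c U

/-- The coloring `c_min` on the Cantor space: the parity of the first difference. -/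
noncomputable def cmin : (ℕ → Bool) → (ℕ → Bool) → Fin 2 :=
  fun x y => if Even (Delta x y) then 0 else 1

/-- The coloring `c_parity` on the Baire space: the parity of the first difference. -/
noncomputable def cparity : (ℕ → ℕ) → (ℕ → ℕ) → Fin 2 :=
  fun x y => if Even (Delta x y) then 0 else 1

/-- A pair-coloring on a subset `A` of the Baire space is an almost node-coloring if the
color of a pair `{x, y}` depends only on the restrictions of `x` and `y` to
`Δ(x, y) + 1`. -/
def AlmostNodeColoring (A : Set (ℕ → ℕ)) (d : (ℕ → ℕ) → (ℕ → ℕ) → Fin 2) : Prop :=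
  ∀ x ∈ A, ∀ y ∈ A, ∀ x' ∈ A, ∀ y' ∈ A, x ≠ y → x' ≠ y' →
    (∀ i ≤ Delta x y, x i = x' i ∧ y i = y' i) → d x y = d x' y'

namespace Stmt6Aux

def Ag {α : Type*} (x y : ℕ → α) (n : ℕ) : Prop := ∀ i, i < n → x i = y i

lemma Ag.mono {α : Type*} {x y : ℕ → α} {n m : ℕ} (h : Ag x y n) (hm : m ≤ n) : Ag x y m :=
  fun i hi => h i (lt_of_lt_of_le hi hm)

lemma Ag.refl {α : Type*} (x : ℕ → α) (n : ℕ) : Ag x x n := fun _ _ => rfl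

lemma Ag.symm {α : Type*} {x y : ℕ → α} {n : ℕ} (h : Ag x y n) : Ag y x n :=
  fun i hi => (h i hi).symm

lemma Ag.trans {α : Type*} {x y z : ℕ → α} {n : ℕ} (h : Ag x y n) (h' : Ag y z n) : Ag x z n :=
  fun i hi => (h i hi).trans (h' i hi)

lemma delta_mem {α : Type*} {x y : ℕ → α} (h : x ≠ y) : x (Delta x y) ≠ y (Delta x y) := by
  have hne : {n | x n ≠ y n}.Nonempty := by
    by_contra h'
    rw [Set.not_nonempty_iff_eq_empty] at h'
    apply h
    funext n
    by_contra hn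
    have : n ∈ {n | x n ≠ y n} := hn
    simp [h'] at this
  exact Nat.sInf_mem hne

lemma delta_lt_eq {α : Type*} {x y : ℕ → α} {i : ℕ} (h : i < Delta x y) : x i = y i := by
  by_contra hne
  have h2 := Nat.sInf_le (show i ∈ {n | x n ≠ y n} from hne)
  unfold Delta at h
  omega

lemma ag_delta {α : Type*} (x y : ℕ → α) : Ag x y (Delta x y) := fun _ hi => delta_lt_eq hi

lemma delta_eq {α : Type*} {x y : ℕ → α} {D : ℕ} (h1 : x D ≠ y D) (h2 : Ag x y D) :
    Delta x y = D := by
  refine le_antisymm (Nat.sInf_le h1) ?_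
  by_contra hlt
  push_neg at hlt
  have hne : {n | x n ≠ y n}.Nonempty := ⟨D, h1⟩
  have := Nat.sInf_mem hne
  exact this (h2 _ hlt)

lemma delta_comm {α : Type*} (x y : ℕ → α) : Delta x y = Delta y x := by
  unfold Delta
  congr 1
  ext n
  exact ne_comm

lemma delta_le_of_ne {α : Type*} {x y : ℕ → α} {i : ℕ} (h : x i ≠ y i) : Delta x y ≤ i :=
  Nat.sInf_le h

lemma cyl_isOpen {α : Type*} [TopologicalSpace α] [DiscreteTopology α] (z : ℕ → α) (n : ℕ) :
    IsOpen {y : ℕ → α | Ag y z n} := by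
  have : {y : ℕ → α | Ag y z n} = ⋂ i ∈ Finset.range n, (fun y : ℕ → α => y i) ⁻¹' {z i} := by
    ext y; simp [Ag]
  rw [this]
  exact isOpen_biInter_finset fun i _ => (continuous_apply i).isOpen_preimage _ (isOpen_discrete _)

lemma cyl_mem_nhds {α : Type*} [TopologicalSpace α] [DiscreteTopology α] (z : ℕ → α) (n : ℕ) :
    {y : ℕ → α | Ag y z n} ∈ nhds z :=
  (cyl_isOpen z n).mem_nhds (Ag.refl z n)

lemma exists_cyl_subset {α : Type*} [TopologicalSpace α] [DiscreteTopology α]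
    {U : Set (ℕ → α)} (hU : IsOpen U) {x : ℕ → α} (hx : x ∈ U) :
    ∃ n, ∀ y, Ag y x n → y ∈ U := by
  rcases (isOpen_pi_iff.mp hU) x hx with ⟨I, u, hu, hsub⟩
  refine ⟨(I.sup id) + 1, fun y hy => hsub ?_⟩
  intro a ha
  have hlt : a < I.sup id + 1 := Nat.lt_succ_of_le (Finset.le_sup (f := id) ha)
  rw [hy a hlt]
  exact (hu a ha).2

lemma cont_of_cyl {α β : Type*} [TopologicalSpace α] [DiscreteTopology α] [TopologicalSpace β]
    {f : (ℕ → α) → β} (h : ∀ x, ∃ n, ∀ y, Ag y x n → f y = f x) : Continuous f := by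
  rw [continuous_def]
  intro U hU
  rw [isOpen_iff_mem_nhds]
  intro x hx
  obtain ⟨n, hn⟩ := h x
  refine Filter.mem_of_superset (cyl_mem_nhds x n) ?_
  intro y hy
  simp only [Set.mem_preimage] at hx ⊢
  rw [hn y hy]
  exact hx

variable {c : (ℕ → Bool) → (ℕ → Bool) → Fin 2}

lemma loc_const (hcont : ContColoring c) {x y : ℕ → Bool} (hxy : x ≠ y) :
    ∃ n, ∀ x' y', Ag x' x n → Ag y' y n → x' ≠ y' → c x' y' = c x y := by
  classical
  set f : {q : (ℕ → Bool) × (ℕ → Bool) // q.1 ≠ q.2} → Fin 2 :=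
    fun p => c p.val.1 p.val.2 with hf
  have hopen : IsOpen (f ⁻¹' {c x y}) := (isOpen_discrete _).preimage hcont
  have hmem : (⟨(x, y), hxy⟩ : {q : (ℕ → Bool) × (ℕ → Bool) // q.1 ≠ q.2}) ∈ f ⁻¹' {c x y} := by
    simp [hf]
  have hnhds : f ⁻¹' {c x y} ∈ nhds (⟨(x, y), hxy⟩ : {q : (ℕ → Bool) × (ℕ → Bool) // q.1 ≠ q.2}) :=
    hopen.mem_nhds hmem
  rw [nhds_subtype_eq_comap, Filter.mem_comap] at hnhds
  obtain ⟨V, hV, hVsub⟩ := hnhds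
  rw [mem_nhds_prod_iff] at hV
  obtain ⟨U1, hU1, U2, hU2, hprod⟩ := hV
  obtain ⟨O1, hO1sub, hO1, hxO1⟩ := mem_nhds_iff.mp hU1
  obtain ⟨O2, hO2sub, hO2, hyO2⟩ := mem_nhds_iff.mp hU2
  obtain ⟨n1, h1⟩ := exists_cyl_subset hO1 hxO1
  obtain ⟨n2, h2⟩ := exists_cyl_subset hO2 hyO2
  refine ⟨max n1 n2, fun x' y' hx' hy' hne => ?_⟩
  have hx'' : x' ∈ U1 := hO1sub (h1 x' (hx'.mono (le_max_left _ _)))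
  have hy'' : y' ∈ U2 := hO2sub (h2 y' (hy'.mono (le_max_right _ _)))
  have : (⟨(x', y'), hne⟩ : {q : (ℕ → Bool) × (ℕ → Bool) // q.1 ≠ q.2}) ∈ f ⁻¹' {c x y} :=
    hVsub (hprod (Set.mk_mem_prod hx'' hy''))
  simpa [hf] using this

lemma uniform_modulus (hcont : ContColoring c) (δ : ℕ) :
    ∃ M, δ < M ∧ ∀ x y x' y' : ℕ → Bool, Ag x y δ → x δ ≠ y δ →
      Ag x' x M → Ag y' y M → c x' y' = c x y := by
  classical
  set K : Set ((ℕ → Bool) × (ℕ → Bool)) := {p | Ag p.1 p.2 δ ∧ p.1 δ ≠ p.2 δ} with hK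
  have hKclosed : IsClosed K := by
    have h1 : IsClosed {p : (ℕ → Bool) × (ℕ → Bool) | Ag p.1 p.2 δ} := by
      have : {p : (ℕ → Bool) × (ℕ → Bool) | Ag p.1 p.2 δ}
          = ⋂ i ∈ Finset.range δ, {p : (ℕ → Bool) × (ℕ → Bool) | p.1 i = p.2 i} := by
        ext p; simp [Ag]
      rw [this]
      refine isClosed_biInter fun i _ => ?_
      exact isClosed_eq ((continuous_apply i).comp continuous_fst)
        ((continuous_apply i).comp continuous_snd)
    have h2 : IsClosed {p : (ℕ → Bool) × (ℕ → Bool) | p.1 δ ≠ p.2 δ} := by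
      have : {p : (ℕ → Bool) × (ℕ → Bool) | p.1 δ ≠ p.2 δ}
          = (fun p : (ℕ → Bool) × (ℕ → Bool) => (p.1 δ, p.2 δ)) ⁻¹' {q : Bool × Bool | q.1 ≠ q.2} := by
        ext p; simp
      rw [this]
      exact (isClosed_discrete _).preimage
        (((continuous_apply δ).comp continuous_fst).prodMk
          ((continuous_apply δ).comp continuous_snd))
    exact h1.inter h2
  have hKcomp : IsCompact K := hKclosed.isCompact
  have key : ∀ p ∈ K, ∃ n, δ < n ∧ ∀ q : (ℕ → Bool) × (ℕ → Bool),
      q.1 ≠ q.2 → Ag q.1 p.1 n → Ag q.2 p.2 n → c q.1 q.2 = c p.1 p.2 := by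
    intro p hp
    have hne : p.1 ≠ p.2 := by
      intro h
      exact hp.2 (by rw [h])
    obtain ⟨n, hn⟩ := loc_const hcont hne
    exact ⟨max n (δ + 1), by omega,
      fun q hq h1 h2 => hn q.1 q.2 (h1.mono (le_max_left _ _)) (h2.mono (le_max_left _ _)) hq⟩
  choose! nn hnn1 hnn2 using key
  set W : (ℕ → Bool) × (ℕ → Bool) → Set ((ℕ → Bool) × (ℕ → Bool)) :=
    fun p => {q | Ag q.1 p.1 (nn p) ∧ Ag q.2 p.2 (nn p)} with hW
  have hWopen : ∀ p ∈ K, IsOpen (W p) := by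
    intro p _
    have : W p = (Prod.fst ⁻¹' {z : ℕ → Bool | Ag z p.1 (nn p)}) ∩
        (Prod.snd ⁻¹' {z : ℕ → Bool | Ag z p.2 (nn p)}) := by
      ext q; simp [hW, Set.mem_setOf_eq]
    rw [this]
    exact ((cyl_isOpen _ _).preimage continuous_fst).inter ((cyl_isOpen _ _).preimage continuous_snd)
  have hcov : K ⊆ ⋃ p ∈ K, W p := by
    intro p hp
    exact Set.mem_biUnion hp ⟨Ag.refl _ _, Ag.refl _ _⟩
  obtain ⟨t, htsub, htfin, htcov⟩ := hKcomp.elim_finite_subcover_image hWopen hcov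
  set M := max (δ + 1) (htfin.toFinset.sup nn) with hM
  refine ⟨M, by omega, fun x y x' y' hAg hne hx' hy' => ?_⟩
  have hxyK : (x, y) ∈ K := ⟨hAg, hne⟩
  obtain ⟨p, hpt, hpW⟩ := Set.mem_iUnion₂.mp (htcov hxyK)
  have hpK : p ∈ K := htsub hpt
  have hnnM : nn p ≤ M := by
    have : nn p ≤ htfin.toFinset.sup nn := Finset.le_sup (htfin.mem_toFinset.mpr hpt)
    omega
  have e1 : c x y = c p.1 p.2 := by
    have hxyne : x ≠ y := by
      intro h; exact hne (by rw [h])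
    exact hnn2 p hpK (x, y) hxyne hpW.1 hpW.2
  have hx'p : Ag x' p.1 (nn p) := (hx'.mono hnnM).trans hpW.1
  have hy'p : Ag y' p.2 (nn p) := (hy'.mono hnnM).trans hpW.2
  have hne' : x' ≠ y' := by
    intro h
    apply hne
    have h1 : x' δ = x δ := hx' δ (by omega)
    have h2 : y' δ = y δ := hy' δ (by omega)
    rw [← h1, ← h2, h]
  have e2 : c x' y' = c p.1 p.2 := hnn2 p hpK (x', y') hne' hx'p hy'p
  rw [e1, e2]


section Machinery

variable (c)

/-- chosen modulus -/
noncomputable def mfun (hc : ContColoring c) (δ : ℕ) : ℕ := (uniform_modulus hc δ).choose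

lemma mfun_gt (hc : ContColoring c) (δ : ℕ) : δ < mfun c hc δ :=
  (uniform_modulus hc δ).choose_spec.1

lemma mfun_spec (hc : ContColoring c) (δ : ℕ) :
    ∀ x y x' y' : ℕ → Bool, Ag x y δ → x δ ≠ y δ →
      Ag x' x (mfun c hc δ) → Ag y' y (mfun c hc δ) → c x' y' = c x y :=
  (uniform_modulus hc δ).choose_spec.2

/-- monotone modulus -/
noncomputable def mhat (hc : ContColoring c) (δ : ℕ) : ℕ := (Finset.range (δ + 1)).sup (mfun c hc)

lemma mhat_mono (hc : ContColoring c) : Monotone (mhat c hc) := by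
  intro a b hab
  exact Finset.sup_mono (Finset.range_subset_range.mpr (by omega))

lemma mfun_le_mhat (hc : ContColoring c) (δ : ℕ) : mfun c hc δ ≤ mhat c hc δ :=
  Finset.le_sup (Finset.self_mem_range_succ δ)

lemma lt_mhat (hc : ContColoring c) (δ : ℕ) : δ < mhat c hc δ :=
  lt_of_lt_of_le (mfun_gt c hc δ) (mfun_le_mhat c hc δ)

lemma modulus_big (hc : ContColoring c) {δ N : ℕ} (hN : mhat c hc δ ≤ N)
    {x y x' y' : ℕ → Bool} (h1 : Ag x y δ) (h2 : x δ ≠ y δ)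
    (h3 : Ag x' x N) (h4 : Ag y' y N) : c x' y' = c x y := by
  have hm : mfun c hc δ ≤ N := le_trans (mfun_le_mhat c hc δ) hN
  exact mfun_spec c hc δ x y x' y' h1 h2 (h3.mono hm) (h4.mono hm)

/-- the scale sequence -/
noncomputable def Cseq (hc : ContColoring c) : ℕ → ℕ
  | 0 => 1
  | n + 1 => mhat c hc (Cseq hc n) + 1

lemma Cseq_strictMono (hc : ContColoring c) : StrictMono (Cseq c hc) := by
  apply strictMono_nat_of_lt_succ
  intro n
  have := lt_mhat c hc (Cseq c hc n)
  show Cseq c hc n < mhat c hc (Cseq c hc n) + 1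
  omega

lemma Cseq_ge (hc : ContColoring c) (n : ℕ) : n + 1 ≤ Cseq c hc n := by
  induction n with
  | zero => simp [Cseq]
  | succ k ih =>
      have h2 : Cseq c hc k < Cseq c hc (k + 1) := Cseq_strictMono c hc (by omega)
      omega

lemma Cseq_unique (hc : ContColoring c) {k a a' : ℕ}
    (h1 : k < Cseq c hc a) (h2 : Cseq c hc a < mhat c hc k)
    (h3 : k < Cseq c hc a') (h4 : Cseq c hc a' < mhat c hc k) : a = a' := by
  have key : ∀ b b' : ℕ, b < b' → k < Cseq c hc b → Cseq c hc b' < mhat c hc k → False := by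
    intro b b' hbb hkb hb'
    have hle : Cseq c hc (b + 1) ≤ Cseq c hc b' := (Cseq_strictMono c hc).le_iff_le.mpr (by omega)
    have : Cseq c hc (b + 1) = mhat c hc (Cseq c hc b) + 1 := rfl
    have hmono : mhat c hc k ≤ mhat c hc (Cseq c hc b) := mhat_mono c hc (by omega)
    omega
  rcases lt_trichotomy a a' with h | h | h
  · exact absurd (key a a' h h1 h4) (by simp)
  · exact h
  · exact absurd (key a' a h h3 h2) (by simp)

/-- the two staggered block boundary sequences -/
noncomputable def bbE (hc : ContColoring c) (j : ℕ) : ℕ := Cseq c hc (2 * j + 1)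
noncomputable def bbO (hc : ContColoring c) (j : ℕ) : ℕ := Cseq c hc (2 * j + 2)

lemma bbE_gt (hc : ContColoring c) (j : ℕ) : j < bbE c hc j := by
  have := Cseq_ge c hc (2 * j + 1); unfold bbE; omega

lemma bbO_gt (hc : ContColoring c) (j : ℕ) : j < bbO c hc j := by
  have := Cseq_ge c hc (2 * j + 2); unfold bbO; omega

/-- encoding of a finite prefix -/
def enc (x : ℕ → Bool) (n : ℕ) : ℕ := Encodable.encode (List.ofFn fun i : Fin n => x i)

lemma enc_eq_iff {x y : ℕ → Bool} {n : ℕ} : enc x n = enc y n ↔ Ag x y n := by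
  constructor
  · intro h
    have h2 := Encodable.encode_injective h
    have h3 := List.ofFn_inj.mp h2
    intro i hi
    exact congrFun h3 ⟨i, hi⟩
  · intro h
    unfold enc
    congr 1
    exact List.ofFn_inj.mpr (funext fun i => h i i.2)

/-- the coding maps into Baire space -/
def sigm (tag : ℕ) (bl : ℕ → ℕ) (x : ℕ → Bool) : ℕ → ℕ := fun n =>
  match n with
  | 0 => tag
  | j + 1 => enc x (bl j)

lemma sigm_cont (tag : ℕ) (bl : ℕ → ℕ) : Continuous (sigm tag bl) := by
  apply continuous_pi
  intro n
  match n with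
  | 0 => exact continuous_const
  | j + 1 =>
      apply cont_of_cyl
      intro x
      exact ⟨bl j, fun y hy => enc_eq_iff.mpr hy⟩

lemma sigm_inj (tag : ℕ) (bl : ℕ → ℕ) (hbl : ∀ j, j < bl j) {x y : ℕ → Bool}
    (hxy : x ≠ y) : sigm tag bl x ≠ sigm tag bl y := by
  intro h
  set δ := Delta x y with hδ
  have h1 : enc x (bl δ) = enc y (bl δ) := congrFun h (δ + 1)
  have h2 : Ag x y (bl δ) := enc_eq_iff.mp h1
  exact delta_mem hxy (h2 δ (hbl δ))


/-- truncation of a sequence at `D` (inclusive) -/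
def trunc (u : ℕ → ℕ) (D : ℕ) : ℕ → ℕ := fun i => if i ≤ D then u i else 0

/-- `x` matches the truncated code `a` up to level `D` -/
def MatchC (bl : ℕ → ℕ) (x : ℕ → Bool) (a : ℕ → ℕ) (D : ℕ) : Prop :=
  ∀ j, j + 1 ≤ D → a (j + 1) = enc x (bl j)

/-- the rectangle `[s|N] × [t|N]` is `c`-constant -/
def RC (s t : ℕ → Bool) (N : ℕ) : Prop :=
  ∀ x₁ y₁ x₂ y₂ : ℕ → Bool, Ag x₁ s N → Ag y₁ t N → Ag x₂ s N → Ag y₂ t N →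
    c x₁ y₁ = c x₂ y₂

/-- symmetric matching of a pair -/
def MPair (bl : ℕ → ℕ) (a b : ℕ → ℕ) (D : ℕ) (x y : ℕ → Bool) : Prop :=
  (MatchC bl x a D ∧ MatchC bl y b D) ∨ (MatchC bl x b D ∧ MatchC bl y a D)

lemma MPair_comm {bl a b : ℕ → ℕ} {D : ℕ} {x y : ℕ → Bool} : MPair bl a b D x y ↔ MPair bl b a D x y := by
  unfold MPair
  tauto

open Classical in
/-- decidedness-indicator coloring data -/
noncomputable def XiInd (bl : ℕ → ℕ) (D : ℕ) (a b : ℕ → ℕ) : Fin 2 :=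
  if (D ≠ 0 ∧ ∀ x y : ℕ → Bool, MPair bl a b D x y → RC c x y (bl (D - 1))) then 1 else 0

open Classical in
/-- decided-value coloring data -/
noncomputable def XiVal (bl : ℕ → ℕ) (D : ℕ) (a b : ℕ → ℕ) : Fin 2 :=
  if (∃ x y : ℕ → Bool, MPair bl a b D x y ∧ c x y = 1) then 1 else 0

/-- parity coloring data -/
def Xi0 (D : ℕ) : Fin 2 := if D % 2 = 0 then 0 else 1

lemma Xi0_ne_succ (D : ℕ) : Xi0 D ≠ Xi0 (D + 1) := by
  unfold Xi0
  rcases Nat.mod_two_eq_zero_or_one D with h | h <;>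
    simp [h, Nat.add_mod]

/-- the master formula -/
noncomputable def Psi (hc : ContColoring c) (D : ℕ) (a b : ℕ → ℕ) : Fin 2 :=
  if a 0 ≠ b 0 then 0
  else if a 0 = 0 then Xi0 D
  else if a 0 = 1 then XiInd c (bbE c hc) D a b
  else if a 0 = 2 then XiVal c (bbE c hc) D a b
  else if a 0 = 3 then XiInd c (bbO c hc) D a b
  else if a 0 = 4 then XiVal c (bbO c hc) D a b
  else 0

/-- the almost node coloring -/
noncomputable def dd (hc : ContColoring c) (u v : ℕ → ℕ) : Fin 2 :=
  Psi c hc (Delta u v) (trunc u (Delta u v)) (trunc v (Delta u v))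

lemma xiInd_comm (bl : ℕ → ℕ) (D : ℕ) (a b : ℕ → ℕ) :
    XiInd c bl D a b = XiInd c bl D b a := by
  classical
  unfold XiInd
  refine if_congr ?_ rfl rfl
  constructor
  · rintro ⟨h1, h2⟩
    exact ⟨h1, fun x y hxy => h2 x y (MPair_comm.mp hxy)⟩
  · rintro ⟨h1, h2⟩
    exact ⟨h1, fun x y hxy => h2 x y (MPair_comm.mpr hxy)⟩

lemma xiVal_comm (bl : ℕ → ℕ) (D : ℕ) (a b : ℕ → ℕ) :
    XiVal c bl D a b = XiVal c bl D b a := by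
  classical
  unfold XiVal
  refine if_congr ?_ rfl rfl
  constructor
  · rintro ⟨x, y, hxy, hv⟩
    exact ⟨x, y, MPair_comm.mp hxy, hv⟩
  · rintro ⟨x, y, hxy, hv⟩
    exact ⟨x, y, MPair_comm.mpr hxy, hv⟩

lemma psi_comm (hc : ContColoring c) (D : ℕ) (a b : ℕ → ℕ) :
    Psi c hc D a b = Psi c hc D b a := by
  unfold Psi
  rcases eq_or_ne (a 0) (b 0) with h | h
  · rw [h]
    split_ifs <;> first
      | rfl
      | exact xiInd_comm c _ _ _ _
      | exact xiVal_comm c _ _ _ _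
      | omega
  · rw [if_pos h, if_pos (Ne.symm h)]

lemma dd_comm (hc : ContColoring c) (u v : ℕ → ℕ) : dd c hc u v = dd c hc v u := by
  unfold dd
  rw [delta_comm u v]
  exact psi_comm c hc _ _ _

lemma dd_anc (hc : ContColoring c) (A : Set (ℕ → ℕ)) : AlmostNodeColoring A (dd c hc) := by
  intro x hx y hy x' hx' y' hy' hxy hxy' hagr
  have hD : Delta x' y' = Delta x y := by
    apply delta_eq
    · rw [← (hagr _ le_rfl).1, ← (hagr _ le_rfl).2]
      exact delta_mem hxy
    · intro i hi
      rw [← (hagr i (le_of_lt hi)).1, ← (hagr i (le_of_lt hi)).2]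
      exact delta_lt_eq hi
  have ht1 : trunc x' (Delta x y) = trunc x (Delta x y) := by
    funext i
    unfold trunc
    by_cases hi : i ≤ Delta x y
    · rw [if_pos hi, if_pos hi, (hagr i hi).1]
    · rw [if_neg hi, if_neg hi]
  have ht2 : trunc y' (Delta x y) = trunc y (Delta x y) := by
    funext i
    unfold trunc
    by_cases hi : i ≤ Delta x y
    · rw [if_pos hi, if_pos hi, (hagr i hi).2]
    · rw [if_neg hi, if_neg hi]
  unfold dd
  rw [hD, ht1, ht2]

end Machinery

section PairFacts

variable (c)
variable (hc : ContColoring c)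

lemma trunc_zero (u : ℕ → ℕ) (D : ℕ) : trunc u D 0 = u 0 := if_pos (Nat.zero_le D)

lemma fin2_cases (a : Fin 2) : a = 0 ∨ a = 1 := by
  fin_cases a
  · exact Or.inl rfl
  · exact Or.inr rfl

lemma rc_congr {s t s' t' : ℕ → Bool} {N : ℕ} (h1 : Ag s s' N) (h2 : Ag t t' N)
    (h : RC c s t N) : RC c s' t' N :=
  fun x₁ y₁ x₂ y₂ a1 a2 a3 a4 =>
    h x₁ y₁ x₂ y₂ (a1.trans h1.symm) (a2.trans h2.symm) (a3.trans h1.symm) (a4.trans h2.symm)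

lemma rc_of_mhat_le {s t : ℕ → Bool} {N : ℕ} (hne : s ≠ t)
    (hN : mhat c hc (Delta s t) ≤ N) : RC c s t N := by
  intro x₁ y₁ x₂ y₂ a1 a2 a3 a4
  rw [modulus_big c hc hN (ag_delta s t) (delta_mem hne) a1 a2,
    modulus_big c hc hN (ag_delta s t) (delta_mem hne) a3 a4]

variable {bl : ℕ → ℕ} {x y : ℕ → Bool}

lemma sigm_matchC (tag : ℕ) (D : ℕ) : MatchC bl x (trunc (sigm tag bl x) D) D := by
  intro j hj
  unfold trunc
  rw [if_pos hj]
  rfl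

lemma sigm_delta_pos (hbl : ∀ j, j < bl j) (hxy : x ≠ y) (tag : ℕ) :
    Delta (sigm tag bl x) (sigm tag bl y) ≠ 0 := by
  intro h
  have h2 := delta_mem (sigm_inj tag bl hbl hxy)
  rw [h] at h2
  exact h2 rfl

lemma sigm_delta_tag (tag tag' : ℕ) :
    Delta (sigm tag bl x) (sigm tag bl y) = Delta (sigm tag' bl x) (sigm tag' bl y) := by
  unfold Delta
  congr 1
  ext n
  match n with
  | 0 => simp [sigm]
  | j + 1 => simp [sigm]

lemma sigm_delta_blk (hbl : ∀ j, j < bl j) (hxy : x ≠ y) (tag : ℕ) :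
    Delta x y < bl (Delta (sigm tag bl x) (sigm tag bl y) - 1) := by
  set u := sigm tag bl x with hu
  set v := sigm tag bl y with hv
  set D := Delta u v with hD
  have hDne : D ≠ 0 := sigm_delta_pos hbl hxy tag
  have hmem : u D ≠ v D := delta_mem (sigm_inj tag bl hbl hxy)
  have hidx : D = (D - 1) + 1 := by omega
  have henc : enc x (bl (D - 1)) ≠ enc y (bl (D - 1)) := by
    intro h
    apply hmem
    rw [hidx]
    show enc x (bl (D - 1)) = enc y (bl (D - 1))
    exact h
  have hnag : ¬ Ag x y (bl (D - 1)) := fun h => henc (enc_eq_iff.mpr h)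
  unfold Ag at hnag
  push_neg at hnag
  obtain ⟨i, hi, hne⟩ := hnag
  exact lt_of_le_of_lt (delta_le_of_ne hne) hi

lemma matchC_ag {x' : ℕ → Bool} {tag D : ℕ} (hD : D ≠ 0)
    (hm : MatchC bl x' (trunc (sigm tag bl x) D) D) : Ag x' x (bl (D - 1)) := by
  have h1 := hm (D - 1) (by omega)
  have h2 : (D - 1) + 1 = D := by omega
  rw [h2] at h1
  unfold trunc at h1
  rw [if_pos (le_refl D)] at h1
  have h3 : sigm tag bl x D = enc x (bl (D - 1)) := by
    conv_lhs => rw [← h2]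
    rfl
  rw [h3] at h1
  exact (enc_eq_iff.mp h1.symm)

/-- extraction from the indicator coloring, value 1 -/
lemma ind_one (hbl : ∀ j, j < bl j) (hxy : x ≠ y) {tag : ℕ}
    (h1 : XiInd c bl (Delta (sigm tag bl x) (sigm tag bl y))
      (trunc (sigm tag bl x) (Delta (sigm tag bl x) (sigm tag bl y)))
      (trunc (sigm tag bl y) (Delta (sigm tag bl x) (sigm tag bl y))) = 1) :
    RC c x y (bl (Delta (sigm tag bl x) (sigm tag bl y) - 1)) := by
  classical
  set D := Delta (sigm tag bl x) (sigm tag bl y) with hD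
  unfold XiInd at h1
  by_cases hcond : (D ≠ 0 ∧ ∀ x' y' : ℕ → Bool,
      MPair bl (trunc (sigm tag bl x) D) (trunc (sigm tag bl y) D) D x' y' →
        RC c x' y' (bl (D - 1)))
  · exact hcond.2 x y (Or.inl ⟨sigm_matchC tag D, sigm_matchC tag D⟩)
  · rw [if_neg hcond] at h1
    exact absurd h1 (by decide)

/-- extraction from the indicator coloring, value 0 -/
lemma ind_zero (hbl : ∀ j, j < bl j) (hxy : x ≠ y) {tag : ℕ}
    (h0 : XiInd c bl (Delta (sigm tag bl x) (sigm tag bl y))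
      (trunc (sigm tag bl x) (Delta (sigm tag bl x) (sigm tag bl y)))
      (trunc (sigm tag bl y) (Delta (sigm tag bl x) (sigm tag bl y))) = 0) :
    bl (Delta (sigm tag bl x) (sigm tag bl y) - 1) < mhat c hc (Delta x y) := by
  classical
  set D := Delta (sigm tag bl x) (sigm tag bl y) with hD
  set N := bl (D - 1) with hN
  have hDne : D ≠ 0 := sigm_delta_pos hbl hxy tag
  unfold XiInd at h0
  by_cases hcond : (D ≠ 0 ∧ ∀ x' y' : ℕ → Bool,
      MPair bl (trunc (sigm tag bl x) D) (trunc (sigm tag bl y) D) D x' y' →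
        RC c x' y' (bl (D - 1)))
  · rw [if_pos hcond] at h0
    exact absurd h0 (by decide)
  · push_neg at hcond
    obtain ⟨x', y', hm, hnrc⟩ := hcond hDne
    by_contra hle
    push_neg at hle
    rcases hm with ⟨hm1, hm2⟩ | ⟨hm1, hm2⟩
    · have ha1 : Ag x' x N := matchC_ag hDne hm1
      have ha2 : Ag y' y N := matchC_ag hDne hm2
      exact hnrc (rc_congr c ha1.symm ha2.symm (rc_of_mhat_le c hc hxy hle))
    · have ha1 : Ag x' y N := matchC_ag hDne hm1
      have ha2 : Ag y' x N := matchC_ag hDne hm2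
      have hyx : y ≠ x := fun h => hxy h.symm
      have hle' : mhat c hc (Delta y x) ≤ N := by rw [delta_comm y x]; exact hle
      exact hnrc (rc_congr c ha1.symm ha2.symm (rc_of_mhat_le c hc hyx hle'))

/-- extraction from the value coloring, assuming decidedness -/
lemma val_eq (hsym : SymmColoring c) (hbl : ∀ j, j < bl j) (hxy : x ≠ y) {tag : ℕ}
    (hRC : RC c x y (bl (Delta (sigm tag bl x) (sigm tag bl y) - 1))) :
    XiVal c bl (Delta (sigm tag bl x) (sigm tag bl y))
      (trunc (sigm tag bl x) (Delta (sigm tag bl x) (sigm tag bl y)))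
      (trunc (sigm tag bl y) (Delta (sigm tag bl x) (sigm tag bl y))) = c x y := by
  classical
  set D := Delta (sigm tag bl x) (sigm tag bl y) with hD
  set N := bl (D - 1) with hN
  have hDne : D ≠ 0 := sigm_delta_pos hbl hxy tag
  have hδ : Delta x y < N := sigm_delta_blk hbl hxy tag
  have hxd : x (Delta x y) ≠ y (Delta x y) := delta_mem hxy
  have hval : ∀ x' y' : ℕ → Bool,
      MPair bl (trunc (sigm tag bl x) D) (trunc (sigm tag bl y) D) D x' y' →
        c x' y' = c x y := by
    intro x' y' hm
    rcases hm with ⟨hm1, hm2⟩ | ⟨hm1, hm2⟩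
    · exact hRC x' y' x y (matchC_ag hDne hm1) (matchC_ag hDne hm2) (Ag.refl x N) (Ag.refl y N)
    · have ha1 : Ag x' y N := matchC_ag hDne hm1
      have ha2 : Ag y' x N := matchC_ag hDne hm2
      have hne' : x' ≠ y' := by
        intro h
        apply hxd
        have e1 : x' (Delta x y) = y (Delta x y) := ha1 _ hδ
        have e2 : y' (Delta x y) = x (Delta x y) := ha2 _ hδ
        rw [← e1, h, e2]
      calc c x' y' = c y' x' := hsym x' y' hne'
        _ = c x y := hRC y' x' x y ha2 ha1 (Ag.refl x N) (Ag.refl y N)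
  unfold XiVal
  rcases eq_or_ne (c x y) 1 with hv | hv
  · rw [if_pos ⟨x, y, Or.inl ⟨sigm_matchC tag D, sigm_matchC tag D⟩, hv⟩, hv]
  · have hv0 : c x y = 0 := by
      rcases fin2_cases (c x y) with h | h
      · exact h
      · exact absurd h hv
    rw [if_neg, hv0]
    rintro ⟨x', y', hm, hone⟩
    rw [hval x' y' hm, hv0] at hone
    exact absurd hone (by decide)

end PairFacts

section Parity

variable (c)
variable (hc : ContColoring c)

/-- the blocks for the parity piece -/
def bl0 : ℕ → ℕ := fun j => j + 1

lemma bl0_gt : ∀ j, j < bl0 j := fun j => Nat.lt_succ_self j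

lemma le_delta_of_ag {α : Type*} {p q : ℕ → α} {n : ℕ} (h : Ag p q n) (hne : p ≠ q) :
    n ≤ Delta p q := by
  by_contra hlt
  push_neg at hlt
  exact delta_mem hne (h _ hlt)

lemma delta_sig0 {x y : ℕ → Bool} (hxy : x ≠ y) :
    Delta (sigm 0 bl0 x) (sigm 0 bl0 y) = Delta x y + 1 := by
  apply delta_eq
  · show enc x (bl0 (Delta x y)) ≠ enc y (bl0 (Delta x y))
    intro h
    exact delta_mem hxy (enc_eq_iff.mp h (Delta x y) (bl0_gt _))
  · intro i hi
    match i with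
    | 0 => rfl
    | j + 1 =>
        show enc x (bl0 j) = enc y (bl0 j)
        exact enc_eq_iff.mpr ((ag_delta x y).mono (by unfold bl0; omega))

lemma dd_sig0 {x y : ℕ → Bool} (hxy : x ≠ y) :
    dd c hc (sigm 0 bl0 x) (sigm 0 bl0 y) = Xi0 (Delta x y + 1) := by
  unfold dd
  set D := Delta (sigm 0 bl0 x) (sigm 0 bl0 y) with hD
  have h0u : trunc (sigm 0 bl0 x) D 0 = 0 := by rw [trunc_zero]; rfl
  have h0v : trunc (sigm 0 bl0 y) D 0 = 0 := by rw [trunc_zero]; rfl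
  unfold Psi
  rw [h0u, h0v]
  norm_num
  rw [hD, delta_sig0 hxy]

/-- the avoidance walk: finitely many parity-homogeneous sets cannot cover -/
lemma walk (L : List (Set (ℕ → Bool)))
    (hL : ∀ S ∈ L, ∃ i : Fin 2, ∀ p ∈ S, ∀ q ∈ S, p ≠ q → Xi0 (Delta p q + 1) = i) :
    ∀ (z : ℕ → Bool) (n : ℕ), ∃ (z' : ℕ → Bool) (n' : ℕ), n ≤ n' ∧ Ag z' z n ∧
      ∀ S ∈ L, ∀ w, Ag w z' n' → w ∉ S := by
  induction L with
  | nil =>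
      intro z n
      exact ⟨z, n, le_rfl, Ag.refl z n, by simp⟩
  | cons S L ih =>
      intro z n
      obtain ⟨z₁, n₁, hn₁, hAg₁, hex₁⟩ := ih (fun T hT => hL T (List.mem_cons_of_mem S hT)) z n
      by_cases hP : ∃ p, p ∈ S ∧ Ag p z₁ n₁
      · obtain ⟨p, hpS, hpAg⟩ := hP
        by_cases hQ : ∃ q, q ∈ S ∧ Ag q z₁ n₁ ∧ q ≠ p
        · obtain ⟨q, hqS, hqAg, hqp⟩ := hQ
          have hpq : p ≠ q := fun h => hqp h.symm
          set e := Delta p q with he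
          have hen : n₁ ≤ e := le_delta_of_ag (hpAg.trans hqAg.symm) hpq
          obtain ⟨iS, hiS⟩ := hL S List.mem_cons_self
          set z₂ : ℕ → Bool := fun i => if i = e + 1 then !(p (e + 1)) else p i with hz₂
          refine ⟨z₂, e + 2, by omega, ?_, ?_⟩
          · intro i hi
            have h1 : z₂ i = p i := if_neg (by omega)
            rw [h1]
            exact (hpAg i (by omega)).trans (hAg₁ i hi)
          · intro T hT w hw
            rcases List.mem_cons.mp hT with rfl | hTL
            · intro hwS
              have hwp_lt : Ag w p (e + 1) := by
                intro i hi
                have h1 : w i = z₂ i := hw i (by omega)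
                have h2 : z₂ i = p i := if_neg (by omega)
                rw [h1, h2]
              have hwp_ne : w (e + 1) ≠ p (e + 1) := by
                have h1 : w (e + 1) = z₂ (e + 1) := hw (e + 1) (by omega)
                have h2 : z₂ (e + 1) = !(p (e + 1)) := if_pos rfl
                rw [h1, h2]
                cases p (e + 1) <;> decide
              have hwne : w ≠ p := fun h => hwp_ne (by rw [h])
              have hΔwp : Delta w p = e + 1 := delta_eq hwp_ne hwp_lt
              have c1 : Xi0 (e + 1) = iS := hiS p hpS q hqS hpq
              have c2 : Xi0 (e + 2) = iS := by
                have := hiS w hwS p hpS hwne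
                rw [hΔwp] at this
                exact this
              exact Xi0_ne_succ (e + 1) (c1.trans c2.symm)
            · refine hex₁ T hTL w ?_
              intro i hi
              have h1 : w i = z₂ i := hw i (by omega)
              have h2 : z₂ i = p i := if_neg (by omega)
              rw [h1, h2]
              exact hpAg i hi |>.trans (Ag.refl z₁ n₁ i hi) |>.symm ▸ (hpAg i hi)
        · push_neg at hQ
          set z₂ : ℕ → Bool := fun i => if i = n₁ then !(p n₁) else p i with hz₂
          refine ⟨z₂, n₁ + 1, by omega, ?_, ?_⟩
          · intro i hi
            have h1 : z₂ i = p i := if_neg (by omega)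
            rw [h1]
            exact (hpAg i (by omega)).trans (hAg₁ i hi)
          · intro T hT w hw
            have hwz₁ : Ag w z₁ n₁ := by
              intro i hi
              have h1 : w i = z₂ i := hw i (by omega)
              have h2 : z₂ i = p i := if_neg (by omega)
              rw [h1, h2]
              exact hpAg i hi
            rcases List.mem_cons.mp hT with rfl | hTL
            · intro hwS
              have hwp : w = p := hQ w hwS hwz₁
              have h1 : w n₁ = z₂ n₁ := hw n₁ (by omega)
              have h2 : z₂ n₁ = !(p n₁) := if_pos rfl
              rw [hwp, h2] at h1
              revert h1
              cases p n₁ <;> decide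
            · exact hex₁ T hTL w hwz₁
      · push_neg at hP
        refine ⟨z₁, n₁, hn₁, hAg₁, ?_⟩
        intro T hT w hw
        rcases List.mem_cons.mp hT with rfl | hTL
        · exact fun hwS => hP w hwS hw
        · exact hex₁ T hTL w hw

/-- any homogeneous cover catching the parity piece is infinite -/
lemma cover_infinite (F : Set (Set (ℕ → ℕ))) (hhom : ∀ H ∈ F, IsHomog (dd c hc) H)
    (hcov : Set.range (sigm 0 bl0) ⊆ ⋃₀ F) : F.Infinite := by
  by_contra hfin
  rw [Set.not_infinite] at hfin
  classical
  set L : List (Set (ℕ → Bool)) :=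
    hfin.toFinset.toList.map (fun H => (sigm 0 bl0) ⁻¹' H) with hLdef
  have hL : ∀ S ∈ L, ∃ i : Fin 2, ∀ p ∈ S, ∀ q ∈ S, p ≠ q → Xi0 (Delta p q + 1) = i := by
    intro S hS
    rw [hLdef, List.mem_map] at hS
    obtain ⟨H, hHmem, rfl⟩ := hS
    have hHF : H ∈ F := hfin.mem_toFinset.mp (Finset.mem_toList.mp hHmem)
    obtain ⟨i, hi⟩ := hhom H hHF
    refine ⟨i, fun p hp q hq hpq => ?_⟩
    have hσ : sigm 0 bl0 p ≠ sigm 0 bl0 q := sigm_inj 0 bl0 bl0_gt hpq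
    have := hi _ hp _ hq hσ
    rw [dd_sig0 c hc hpq] at this
    exact this
  obtain ⟨z', n', _, _, hex⟩ := walk L hL (fun _ => false) 0
  have hz'A : sigm 0 bl0 z' ∈ ⋃₀ F := hcov ⟨z', rfl⟩
  obtain ⟨H, hHF, hz'H⟩ := hz'A
  have hSL : (sigm 0 bl0) ⁻¹' H ∈ L := by
    rw [hLdef, List.mem_map]
    exact ⟨H, Finset.mem_toList.mpr (hfin.mem_toFinset.mpr hHF), rfl⟩
  exact hex _ hSL z' (Ag.refl z' n') hz'H

end Parity

section Unfold

variable (c)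
variable (hc : ContColoring c)

lemma dd_sigE1 (x y : ℕ → Bool) :
    dd c hc (sigm 1 (bbE c hc) x) (sigm 1 (bbE c hc) y)
      = XiInd c (bbE c hc) (Delta (sigm 1 (bbE c hc) x) (sigm 1 (bbE c hc) y))
          (trunc (sigm 1 (bbE c hc) x) (Delta (sigm 1 (bbE c hc) x) (sigm 1 (bbE c hc) y)))
          (trunc (sigm 1 (bbE c hc) y) (Delta (sigm 1 (bbE c hc) x) (sigm 1 (bbE c hc) y))) := by
  unfold dd Psi
  rw [trunc_zero, trunc_zero]
  have e1 : sigm 1 (bbE c hc) x 0 = 1 := rfl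
  have e2 : sigm 1 (bbE c hc) y 0 = 1 := rfl
  rw [e1, e2]
  norm_num

lemma dd_sigE2 (x y : ℕ → Bool) :
    dd c hc (sigm 2 (bbE c hc) x) (sigm 2 (bbE c hc) y)
      = XiVal c (bbE c hc) (Delta (sigm 2 (bbE c hc) x) (sigm 2 (bbE c hc) y))
          (trunc (sigm 2 (bbE c hc) x) (Delta (sigm 2 (bbE c hc) x) (sigm 2 (bbE c hc) y)))
          (trunc (sigm 2 (bbE c hc) y) (Delta (sigm 2 (bbE c hc) x) (sigm 2 (bbE c hc) y))) := by
  unfold dd Psi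
  rw [trunc_zero, trunc_zero]
  have e1 : sigm 2 (bbE c hc) x 0 = 2 := rfl
  have e2 : sigm 2 (bbE c hc) y 0 = 2 := rfl
  rw [e1, e2]
  norm_num

lemma dd_sigO1 (x y : ℕ → Bool) :
    dd c hc (sigm 3 (bbO c hc) x) (sigm 3 (bbO c hc) y)
      = XiInd c (bbO c hc) (Delta (sigm 3 (bbO c hc) x) (sigm 3 (bbO c hc) y))
          (trunc (sigm 3 (bbO c hc) x) (Delta (sigm 3 (bbO c hc) x) (sigm 3 (bbO c hc) y)))
          (trunc (sigm 3 (bbO c hc) y) (Delta (sigm 3 (bbO c hc) x) (sigm 3 (bbO c hc) y))) := by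
  unfold dd Psi
  rw [trunc_zero, trunc_zero]
  have e1 : sigm 3 (bbO c hc) x 0 = 3 := rfl
  have e2 : sigm 3 (bbO c hc) y 0 = 3 := rfl
  rw [e1, e2]
  norm_num

lemma dd_sigO2 (x y : ℕ → Bool) :
    dd c hc (sigm 4 (bbO c hc) x) (sigm 4 (bbO c hc) y)
      = XiVal c (bbO c hc) (Delta (sigm 4 (bbO c hc) x) (sigm 4 (bbO c hc) y))
          (trunc (sigm 4 (bbO c hc) x) (Delta (sigm 4 (bbO c hc) x) (sigm 4 (bbO c hc) y)))
          (trunc (sigm 4 (bbO c hc) y) (Delta (sigm 4 (bbO c hc) x) (sigm 4 (bbO c hc) y))) := by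
  unfold dd Psi
  rw [trunc_zero, trunc_zero]
  have e1 : sigm 4 (bbO c hc) x 0 = 4 := rfl
  have e2 : sigm 4 (bbO c hc) y 0 = 4 := rfl
  rw [e1, e2]
  norm_num

lemma bbE_gt' (j : ℕ) : j < bbE c hc j := bbE_gt c hc j
lemma bbO_gt' (j : ℕ) : j < bbO c hc j := bbO_gt c hc j

/-- the decided-case transfer: if the indicator piece says `decided`, the value piece
computes `c x y`. Stated for the `E` pair of pieces. -/
lemma transfer_E (hsym : SymmColoring c) {x y : ℕ → Bool} (hxy : x ≠ y)
    (h1 : dd c hc (sigm 1 (bbE c hc) x) (sigm 1 (bbE c hc) y) = 1) :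
    c x y = dd c hc (sigm 2 (bbE c hc) x) (sigm 2 (bbE c hc) y) := by
  have hRC : RC c x y (bbE c hc (Delta (sigm 1 (bbE c hc) x) (sigm 1 (bbE c hc) y) - 1)) := by
    apply ind_one c (bbE_gt c hc) hxy
    rw [← dd_sigE1 c hc x y]
    exact h1
  have hDeq : Delta (sigm 1 (bbE c hc) x) (sigm 1 (bbE c hc) y)
      = Delta (sigm 2 (bbE c hc) x) (sigm 2 (bbE c hc) y) := sigm_delta_tag 1 2
  rw [hDeq] at hRC
  rw [dd_sigE2 c hc x y]
  exact (val_eq c hsym (bbE_gt c hc) hxy hRC).symm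

lemma transfer_O (hsym : SymmColoring c) {x y : ℕ → Bool} (hxy : x ≠ y)
    (h1 : dd c hc (sigm 3 (bbO c hc) x) (sigm 3 (bbO c hc) y) = 1) :
    c x y = dd c hc (sigm 4 (bbO c hc) x) (sigm 4 (bbO c hc) y) := by
  have hRC : RC c x y (bbO c hc (Delta (sigm 3 (bbO c hc) x) (sigm 3 (bbO c hc) y) - 1)) := by
    apply ind_one c (bbO_gt c hc) hxy
    rw [← dd_sigO1 c hc x y]
    exact h1
  have hDeq : Delta (sigm 3 (bbO c hc) x) (sigm 3 (bbO c hc) y)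
      = Delta (sigm 4 (bbO c hc) x) (sigm 4 (bbO c hc) y) := sigm_delta_tag 3 4
  rw [hDeq] at hRC
  rw [dd_sigO2 c hc x y]
  exact (val_eq c hsym (bbO_gt c hc) hxy hRC).symm

/-- the undecided-undecided case is impossible for two distinct points -/
lemma transfer_U {x y : ℕ → Bool} (hxy : x ≠ y)
    (h1 : dd c hc (sigm 1 (bbE c hc) x) (sigm 1 (bbE c hc) y) = 0)
    (h3 : dd c hc (sigm 3 (bbO c hc) x) (sigm 3 (bbO c hc) y) = 0) : False := by
  set δ := Delta x y with hδ
  set J1 := Delta (sigm 1 (bbE c hc) x) (sigm 1 (bbE c hc) y) - 1 with hJ1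
  set J3 := Delta (sigm 3 (bbO c hc) x) (sigm 3 (bbO c hc) y) - 1 with hJ3
  have hlow1 : δ < bbE c hc J1 := sigm_delta_blk (bbE_gt c hc) hxy 1
  have hlow3 : δ < bbO c hc J3 := sigm_delta_blk (bbO_gt c hc) hxy 3
  have hup1 : bbE c hc J1 < mhat c hc δ := by
    apply ind_zero c hc (bbE_gt c hc) hxy
    rw [← dd_sigE1 c hc x y]
    exact h1
  have hup3 : bbO c hc J3 < mhat c hc δ := by
    apply ind_zero c hc (bbO_gt c hc) hxy
    rw [← dd_sigO1 c hc x y]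
    exact h3
  have := Cseq_unique c hc (k := δ) (a := 2 * J1 + 1) (a' := 2 * J3 + 2)
    hlow1 hup1 hlow3 hup3
  omega

end Unfold

end Stmt6Aux

open Stmt6Aux

/-- For every continuous pair-coloring `c` on the Cantor space there are a compact set
`A ⊆ ℕ^ℕ` and an almost node-coloring `d` on `A` with `hm(c) ≤ hm(d)`. -/
theorem stmt6 (c : (ℕ → Bool) → (ℕ → Bool) → Fin 2)
    (hsym : SymmColoring c) (hcont : ContColoring c) :
    ∃ (A : Set (ℕ → ℕ)) (d : (ℕ → ℕ) → (ℕ → ℕ) → Fin 2),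
      IsCompact A ∧ (∀ x ∈ A, ∀ y ∈ A, x ≠ y → d x y = d y x) ∧
      AlmostNodeColoring A d ∧ hm c ≤ hmOn d A := by
  classical
  set s0 : (ℕ → Bool) → (ℕ → ℕ) := sigm 0 bl0 with hs0
  set s1 : (ℕ → Bool) → (ℕ → ℕ) := sigm 1 (bbE c hcont) with hs1
  set s2 : (ℕ → Bool) → (ℕ → ℕ) := sigm 2 (bbE c hcont) with hs2
  set s3 : (ℕ → Bool) → (ℕ → ℕ) := sigm 3 (bbO c hcont) with hs3
  set s4 : (ℕ → Bool) → (ℕ → ℕ) := sigm 4 (bbO c hcont) with hs4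
  set A : Set (ℕ → ℕ) :=
    Set.range s0 ∪ Set.range s1 ∪ Set.range s2 ∪ Set.range s3 ∪ Set.range s4 with hA
  have hs1A : ∀ x, s1 x ∈ A := fun x => by
    rw [hA]; left; left; left; right; exact ⟨x, rfl⟩
  have hs2A : ∀ x, s2 x ∈ A := fun x => by
    rw [hA]; left; left; right; exact ⟨x, rfl⟩
  have hs3A : ∀ x, s3 x ∈ A := fun x => by
    rw [hA]; left; right; exact ⟨x, rfl⟩
  have hs4A : ∀ x, s4 x ∈ A := fun x => by
    rw [hA]; right; exact ⟨x, rfl⟩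
  have hs0A : ∀ x, s0 x ∈ A := fun x => by
    rw [hA]; left; left; left; left; exact ⟨x, rfl⟩
  refine ⟨A, dd c hcont, ?_, ?_, ?_, ?_⟩
  · -- compactness
    rw [hA]
    exact ((((isCompact_range (sigm_cont 0 _)).union
      (isCompact_range (sigm_cont 1 _))).union
      (isCompact_range (sigm_cont 2 _))).union
      (isCompact_range (sigm_cont 3 _))).union
      (isCompact_range (sigm_cont 4 _))
  · -- symmetry
    intro u _ v _ _
    exact dd_comm c hcont u v
  · -- almost node coloring
    exact dd_anc c hcont A
  · -- the covering-number inequality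
    apply le_csInf
    · -- the defining set of hmOn is nonempty
      refine ⟨#↥((fun a : ℕ → ℕ => ({a} : Set (ℕ → ℕ))) '' A),
        (fun a : ℕ → ℕ => ({a} : Set (ℕ → ℕ))) '' A, rfl, ?_, ?_⟩
      · rintro H ⟨a, haA, rfl⟩
        refine ⟨Set.singleton_subset_iff.mpr haA, 0, ?_⟩
        intro x hx y hy hxy
        rw [Set.mem_singleton_iff] at hx hy
        exact absurd (hx.trans hy.symm) hxy
      · rw [Set.sUnion_image]
        exact Set.biUnion_of_singleton A
    · rintro κ ⟨F, hκ, hF, hFU⟩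
      subst hκ
      -- every such cover is infinite, thanks to the parity piece
      have hinf : F.Infinite := by
        apply cover_infinite c hcont F (fun H hH => (hF H hH).2)
        intro u hu
        rw [hFU]
        obtain ⟨x, rfl⟩ := hu
        exact hs0A x
      have haleph : ℵ₀ ≤ #↥F := by
        rw [Cardinal.aleph0_le_mk_iff, Set.infinite_coe_iff]
        exact hinf
      -- the color of each member of the cover
      set col : Set (ℕ → ℕ) → Fin 2 :=
        fun H => if h : IsHomog (dd c hcont) H then h.choose else 0 with hcoldef
      have hcol : ∀ H ∈ F, ∀ u ∈ H, ∀ v ∈ H, u ≠ v → dd c hcont u v = col H := by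
        intro H hH u hu v hv huv
        have hhom : IsHomog (dd c hcont) H := (hF H hH).2
        rw [hcoldef]
        simp only [dif_pos hhom]
        exact hhom.choose_spec u hu v hv huv
      -- membership pickers
      have pick : ∀ (s : (ℕ → Bool) → (ℕ → ℕ)), (∀ x, s x ∈ A) →
          ∀ x : ℕ → Bool, ∃ H, H ∈ F ∧ s x ∈ H := by
        intro s hs x
        have : s x ∈ ⋃₀ F := by rw [hFU]; exact hs x
        obtain ⟨H, hHF, hmem⟩ := this
        exact ⟨H, hHF, hmem⟩
      choose P1 hP1F hP1m using pick s1 hs1A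
      choose P2 hP2F hP2m using pick s2 hs2A
      choose P3 hP3F hP3m using pick s3 hs3A
      choose P4 hP4F hP4m using pick s4 hs4A
      -- the transferred cover
      set g : (↥F × ↥F) ⊕ ((↥F × ↥F) ⊕ (↥F × ↥F)) → Set (ℕ → Bool) := fun idx =>
        match idx with
        | Sum.inl (H1, H2) =>
            if col ↑H1 = 1 then (s1 ⁻¹' ↑H1) ∩ (s2 ⁻¹' ↑H2) else ∅
        | Sum.inr (Sum.inl (H3, H4)) =>
            if col ↑H3 = 1 then (s3 ⁻¹' ↑H3) ∩ (s4 ⁻¹' ↑H4) else ∅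
        | Sum.inr (Sum.inr (H1, H3)) =>
            if col ↑H1 = 0 ∧ col ↑H3 = 0 then (s1 ⁻¹' ↑H1) ∩ (s3 ⁻¹' ↑H3) else ∅
        with hg
      have hhomog : ∀ B ∈ Set.range g, IsHomog c B := by
        rintro B ⟨idx, rfl⟩
        rcases idx with ⟨H1, H2⟩ | ⟨H1, H2⟩ | ⟨H1, H3⟩
        · show IsHomog c (if col ↑H1 = 1 then (s1 ⁻¹' ↑H1) ∩ (s2 ⁻¹' ↑H2) else ∅)
          by_cases h1 : col ↑H1 = 1
          · rw [if_pos h1]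
            refine ⟨col ↑H2, ?_⟩
            intro x hx y hy hxy
            have hd1 : dd c hcont (s1 x) (s1 y) = col ↑H1 :=
              hcol ↑H1 H1.2 _ hx.1 _ hy.1 (sigm_inj 1 _ (bbE_gt c hcont) hxy)
            rw [h1] at hd1
            have hval := transfer_E c hcont hsym hxy hd1
            have hd2 : dd c hcont (s2 x) (s2 y) = col ↑H2 :=
              hcol ↑H2 H2.2 _ hx.2 _ hy.2 (sigm_inj 2 _ (bbE_gt c hcont) hxy)
            rw [hval, hd2]
          · rw [if_neg h1]
            exact ⟨0, fun x hx => absurd hx (Set.notMem_empty x)⟩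
        · show IsHomog c (if col ↑H1 = 1 then (s3 ⁻¹' ↑H1) ∩ (s4 ⁻¹' ↑H2) else ∅)
          by_cases h1 : col ↑H1 = 1
          · rw [if_pos h1]
            refine ⟨col ↑H2, ?_⟩
            intro x hx y hy hxy
            have hd1 : dd c hcont (s3 x) (s3 y) = col ↑H1 :=
              hcol ↑H1 H1.2 _ hx.1 _ hy.1 (sigm_inj 3 _ (bbO_gt c hcont) hxy)
            rw [h1] at hd1
            have hval := transfer_O c hcont hsym hxy hd1
            have hd2 : dd c hcont (s4 x) (s4 y) = col ↑H2 :=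
              hcol ↑H2 H2.2 _ hx.2 _ hy.2 (sigm_inj 4 _ (bbO_gt c hcont) hxy)
            rw [hval, hd2]
          · rw [if_neg h1]
            exact ⟨0, fun x hx => absurd hx (Set.notMem_empty x)⟩
        · show IsHomog c (if col ↑H1 = 0 ∧ col ↑H3 = 0 then (s1 ⁻¹' ↑H1) ∩ (s3 ⁻¹' ↑H3) else ∅)
          by_cases h1 : col ↑H1 = 0 ∧ col ↑H3 = 0
          · rw [if_pos h1]
            refine ⟨0, ?_⟩
            intro x hx y hy hxy
            exfalso
            have hd1 : dd c hcont (s1 x) (s1 y) = col ↑H1 :=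
              hcol ↑H1 H1.2 _ hx.1 _ hy.1 (sigm_inj 1 _ (bbE_gt c hcont) hxy)
            have hd3 : dd c hcont (s3 x) (s3 y) = col ↑H3 :=
              hcol ↑H3 H3.2 _ hx.2 _ hy.2 (sigm_inj 3 _ (bbO_gt c hcont) hxy)
            rw [h1.1] at hd1
            rw [h1.2] at hd3
            exact transfer_U c hcont hxy hd1 hd3
          · rw [if_neg h1]
            exact ⟨0, fun x hx => absurd hx (Set.notMem_empty x)⟩
      have hcover : ⋃₀ Set.range g = Set.univ := by
        apply Set.eq_univ_of_forall
        intro x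
        rcases fin2_cases (col (P1 x)) with h1 | h1
        · rcases fin2_cases (col (P3 x)) with h3 | h3
          · -- both undecided: the U piece catches x
            refine ⟨g (Sum.inr (Sum.inr (⟨P1 x, hP1F x⟩, ⟨P3 x, hP3F x⟩))),
              Set.mem_range_self (Sum.inr (Sum.inr ((⟨P1 x, hP1F x⟩ : ↥F), (⟨P3 x, hP3F x⟩ : ↥F)))), ?_⟩
            show x ∈ if col (P1 x) = 0 ∧ col (P3 x) = 0 then _ ∩ _ else ∅
            rw [if_pos ⟨h1, h3⟩]
            exact ⟨hP1m x, hP3m x⟩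
          · refine ⟨g (Sum.inr (Sum.inl (⟨P3 x, hP3F x⟩, ⟨P4 x, hP4F x⟩))),
              Set.mem_range_self (Sum.inr (Sum.inl ((⟨P3 x, hP3F x⟩ : ↥F), (⟨P4 x, hP4F x⟩ : ↥F)))), ?_⟩
            show x ∈ if col (P3 x) = 1 then _ ∩ _ else ∅
            rw [if_pos h3]
            exact ⟨hP3m x, hP4m x⟩
        · refine ⟨g (Sum.inl (⟨P1 x, hP1F x⟩, ⟨P2 x, hP2F x⟩)),
            Set.mem_range_self (Sum.inl ((⟨P1 x, hP1F x⟩ : ↥F), (⟨P2 x, hP2F x⟩ : ↥F))), ?_⟩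
          show x ∈ if col (P1 x) = 1 then _ ∩ _ else ∅
          rw [if_pos h1]
          exact ⟨hP1m x, hP2m x⟩
      -- cardinal bookkeeping
      have hle1 : hm c ≤ #↥(Set.range g) :=
        csInf_le' ⟨Set.range g, rfl, hhomog, hcover⟩
      have hle2 : #↥(Set.range g) ≤ #((↥F × ↥F) ⊕ ((↥F × ↥F) ⊕ (↥F × ↥F))) :=
        Cardinal.mk_range_le
      have hsum : #((↥F × ↥F) ⊕ ((↥F × ↥F) ⊕ (↥F × ↥F)))
          = #↥F * #↥F + (#↥F * #↥F + #↥F * #↥F) := by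
        simp [Cardinal.mk_sum, Cardinal.mk_prod, Cardinal.lift_id]
      have hmul : #↥F * #↥F = #↥F := Cardinal.mul_eq_self haleph
      have hfin : #((↥F × ↥F) ⊕ ((↥F × ↥F) ⊕ (↥F × ↥F))) = #↥F := by
        rw [hsum, hmul, Cardinal.add_eq_self haleph, Cardinal.add_eq_self haleph]
      calc hm c ≤ #↥(Set.range g) := hle1
        _ ≤ _ := hle2
        _ = #↥F := hfin
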